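/- For a central hyperplane arrangement with n hyperplanes in which any two dependent 3-element subsets share at most one element, dim(I₂³) = dim(span C₃) + dim(span F₃), where I₂³ = I²·E¹ is the degree-3 part of the ideal generated by I², C₃ = {e_t∂e_S : S dependent triple, t ∈ S}, F₃ = {e_t∂e_S : S dependent triple, t ∉ S}; i.e., span(C₃) ⊕ span(F₃) = I₂³. -/

import Mathlib

open ExteriorAlgebra

variable (n : ℕ)

/-- The standard generator `e i` of the exterior algebra `E = Λ(ℂⁿ)`. -/
noncomputable def gen (i : Fin n) : ExteriorAlgebra ℂ (Fin n → ℂ) :=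
  ι ℂ (Pi.single i (1 : ℂ))

/-- `∂e_{ijk} = e_j ∧ e_k - e_i ∧ e_k + e_i ∧ e_j`. -/
noncomputable def bdry (i j k : Fin n) : ExteriorAlgebra ℂ (Fin n → ℂ) :=
  gen n j * gen n k - gen n i * gen n k + gen n i * gen n j

noncomputable def phi (i j k : Fin n) : ExteriorAlgebra ℂ (Fin n → ℂ) →ₗ[ℂ] ℂ :=
  ExteriorAlgebra.liftAlternating
    (Function.update (fun _ => 0) 3
      ((Matrix.detRowAlternating).compLinearMap (LinearMap.funLeft ℂ ℂ ![i, j, k])))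

noncomputable def Dm (i j k a b c : Fin n) : ℂ :=
  Matrix.det (Matrix.of fun r s : Fin 3 =>
    if (![i, j, k] s : Fin n) = ![a, b, c] r then (1 : ℂ) else 0)

lemma phi_mono (i j k a b c : Fin n) :
    phi n i j k (gen n a * gen n b * gen n c) = Dm n i j k a b c := by
  have h1 : gen n a * gen n b * gen n c
      = ιMulti ℂ 3 ![Pi.single a 1, Pi.single b 1, Pi.single c 1] := by
    rw [ιMulti_apply]
    show _ = (List.ofFn fun i => ι ℂ (![Pi.single a 1, Pi.single b 1, Pi.single c 1] i)).prod
    rw [List.ofFn_succ, List.ofFn_succ, List.ofFn_succ, List.ofFn_zero]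
    simp [gen, mul_assoc]
  rw [h1, phi, liftAlternating_apply_ιMulti, Function.update_self]
  simp only [AlternatingMap.compLinearMap_apply]
  rw [Matrix.detRowAlternating]
  congr 1
  ext r s
  simp only [Matrix.of_apply, LinearMap.funLeft_apply, Dm]
  fin_cases r <;> simp [Pi.single_apply] <;> rfl

lemma Dm_zero_a (i j k a b c : Fin n) (h1 : a ≠ i) (h2 : a ≠ j) (h3 : a ≠ k) :
    Dm n i j k a b c = 0 :=
  Matrix.det_eq_zero_of_row_eq_zero 0 fun s => by
    fin_cases s <;> simp [h1.symm, h2.symm, h3.symm]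

lemma Dm_zero_b (i j k a b c : Fin n) (h1 : b ≠ i) (h2 : b ≠ j) (h3 : b ≠ k) :
    Dm n i j k a b c = 0 :=
  Matrix.det_eq_zero_of_row_eq_zero 1 fun s => by
    fin_cases s <;> simp [h1.symm, h2.symm, h3.symm]

lemma Dm_zero_c (i j k a b c : Fin n) (h1 : c ≠ i) (h2 : c ≠ j) (h3 : c ≠ k) :
    Dm n i j k a b c = 0 :=
  Matrix.det_eq_zero_of_row_eq_zero 2 fun s => by
    fin_cases s <;> simp [h1.symm, h2.symm, h3.symm]

lemma Dm_zero_ab (i j k a b c : Fin n) (h : a = b) : Dm n i j k a b c = 0 := by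
  subst h
  exact Matrix.det_zero_of_row_eq (i := 0) (j := 1) (by decide) (funext fun s => by simp; rfl)

lemma Dm_zero_ac (i j k a b c : Fin n) (h : a = c) : Dm n i j k a b c = 0 := by
  subst h
  exact Matrix.det_zero_of_row_eq (i := 0) (j := 2) (by decide) (funext fun s => by simp; rfl)

lemma Dm_zero_bc (i j k a b c : Fin n) (h : b = c) : Dm n i j k a b c = 0 := by
  subst h
  exact Matrix.det_zero_of_row_eq (i := 1) (j := 2) (by decide) (funext fun s => by simp; rfl)

lemma Dm_val1 (i j k : Fin n) (hij : i ≠ j) (hik : i ≠ k) (hjk : j ≠ k) :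
    Dm n i j k i j k = 1 := by
  simp [Dm, Matrix.det_fin_three, hij, hik, hjk, hij.symm, hik.symm, hjk.symm]

lemma Dm_val2 (i j k : Fin n) (hij : i ≠ j) (hik : i ≠ k) (hjk : j ≠ k) :
    Dm n i j k j i k = -1 := by
  simp [Dm, Matrix.det_fin_three, hij, hik, hjk, hij.symm, hik.symm, hjk.symm]

lemma Dm_val3 (i j k : Fin n) (hij : i ≠ j) (hik : i ≠ k) (hjk : j ≠ k) :
    Dm n i j k k i j = 1 := by
  simp [Dm, Matrix.det_fin_three, hij, hik, hjk, hij.symm, hik.symm, hjk.symm]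

lemma phi_bdry (i j k i' j' k' t : Fin n) :
    phi n i j k (gen n t * bdry n i' j' k') =
      Dm n i j k t j' k' - Dm n i j k t i' k' + Dm n i j k t i' j' := by
  simp only [bdry, mul_sub, mul_add, map_sub, map_add, ← mul_assoc, phi_mono]

lemma gen_sq (x : Fin n) : gen n x * gen n x = 0 := ι_sq_zero _

lemma gen_swap (x y : Fin n) : gen n x * gen n y = -(gen n y * gen n x) :=
  eq_neg_of_add_eq_zero_left (ι_add_mul_swap _ _)

lemma phi_diag (i j k t : Fin n) (hij : i ≠ j) (hik : i ≠ k) (hjk : j ≠ k)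
    (ht : t = i ∨ t = j ∨ t = k) : phi n i j k (gen n t * bdry n i j k) = 1 := by
  rw [phi_bdry]
  rcases ht with rfl | rfl | rfl
  · rw [Dm_val1 n t j k hij hik hjk, Dm_zero_ab n t j k t t k rfl,
      Dm_zero_ab n t j k t t j rfl]; ring
  · rw [Dm_val2 n i t k hij hik hjk, Dm_zero_ab n i t k t t k rfl,
      Dm_zero_ac n i t k t i t rfl]; ring
  · rw [Dm_val3 n i j t hij hik hjk, Dm_zero_ac n i j t t j t rfl,
      Dm_zero_ac n i j t t i t rfl]; ring

lemma gen_mul_bdry (i j k t : Fin n) (ht : t = i ∨ t = j ∨ t = k) :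
    gen n t * bdry n i j k = gen n i * gen n j * gen n k := by
  rcases ht with rfl | rfl | rfl
  · simp [bdry, mul_add, mul_sub, ← mul_assoc, gen_sq]
  · have T1 : gen n t * (gen n t * gen n k) = 0 := by
      rw [← mul_assoc, gen_sq, zero_mul]
    have T2 : gen n t * (gen n i * gen n k) = -(gen n i * gen n t * gen n k) := by
      rw [← mul_assoc, gen_swap n t i, neg_mul]
    have T3 : gen n t * (gen n i * gen n t) = 0 := by
      rw [← mul_assoc, gen_swap n t i, neg_mul, mul_assoc, gen_sq, mul_zero, neg_zero]
    rw [bdry, mul_add, mul_sub, T1, T2, T3]; simp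
  · have T1 : gen n t * (gen n j * gen n t) = 0 := by
      rw [← mul_assoc, gen_swap n t j, neg_mul, mul_assoc, gen_sq, mul_zero, neg_zero]
    have T2 : gen n t * (gen n i * gen n t) = 0 := by
      rw [← mul_assoc, gen_swap n t i, neg_mul, mul_assoc, gen_sq, mul_zero, neg_zero]
    have T3 : gen n t * (gen n i * gen n j) = gen n i * gen n j * gen n t := by
      rw [← mul_assoc, gen_swap n t i, neg_mul, mul_assoc, gen_swap n t j, mul_neg,
        neg_neg, ← mul_assoc]
    rw [bdry, mul_add, mul_sub, T1, T2, T3]; simp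

lemma Dm_zero_of_ne (i j k a b c : Fin n)
    (h : ¬(a ≠ b ∧ a ≠ c ∧ b ≠ c ∧ ({a, b, c} : Finset (Fin n)) = {i, j, k})) :
    Dm n i j k a b c = 0 := by
  by_cases hab : a = b
  · exact Dm_zero_ab n i j k a b c hab
  by_cases hac : a = c
  · exact Dm_zero_ac n i j k a b c hac
  by_cases hbc : b = c
  · exact Dm_zero_bc n i j k a b c hbc
  by_cases ha : a = i ∨ a = j ∨ a = k
  · by_cases hb : b = i ∨ b = j ∨ b = k
    · by_cases hc : c = i ∨ c = j ∨ c = k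
      · exfalso
        apply h
        refine ⟨hab, hac, hbc, Finset.eq_of_subset_of_card_le ?_ ?_⟩
        · intro x hx
          simp only [Finset.mem_insert, Finset.mem_singleton] at hx ⊢
          rcases hx with rfl | rfl | rfl
          exacts [ha, hb, hc]
        · have h3 : ({a, b, c} : Finset (Fin n)).card = 3 := by
            rw [Finset.card_insert_of_notMem (by simp [hab, hac]),
              Finset.card_insert_of_notMem (by simp [hbc]), Finset.card_singleton]
          rw [h3]
          calc ({i, j, k} : Finset (Fin n)).card
              ≤ ({j, k} : Finset (Fin n)).card + 1 := Finset.card_insert_le _ _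
            _ ≤ (({k} : Finset (Fin n)).card + 1) + 1 := by
                exact Nat.add_le_add_right (Finset.card_insert_le _ _) 1
            _ ≤ 3 := by simp
      · push_neg at hc
        exact Dm_zero_c n i j k a b c hc.1 hc.2.1 hc.2.2
    · push_neg at hb
      exact Dm_zero_b n i j k a b c hb.1 hb.2.1 hb.2.2
  · push_neg at ha
    exact Dm_zero_a n i j k a b c ha.1 ha.2.1 ha.2.2

lemma triple_eq {i j k i' j' k' : Fin n} (h1 : i < j) (h2 : j < k) (h1' : i' < j')
    (h2' : j' < k') (h : ({i, j, k} : Finset (Fin n)) = {i', j', k'}) :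
    i = i' ∧ j = j' ∧ k = k' := by
  have m1 : i = i' ∨ i = j' ∨ i = k' := by
    have : i ∈ ({i', j', k'} : Finset (Fin n)) := h ▸ (by simp)
    simpa using this
  have m2 : j = i' ∨ j = j' ∨ j = k' := by
    have : j ∈ ({i', j', k'} : Finset (Fin n)) := h ▸ (by simp)
    simpa using this
  have m3 : k = i' ∨ k = j' ∨ k = k' := by
    have : k ∈ ({i', j', k'} : Finset (Fin n)) := h ▸ (by simp)
    simpa using this
  have m4 : i' = i ∨ i' = j ∨ i' = k := by
    have : i' ∈ ({i, j, k} : Finset (Fin n)) := h ▸ (by simp)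
    simpa using this
  simp only [Fin.ext_iff, Fin.lt_def] at *
  omega


set_option maxHeartbeats 2000000 in
/-- For a central hyperplane arrangement given by `n` nonzero, pairwise non-proportional
linear forms `α i` on `ℂ^ℓ` in which any two distinct dependent 3-element subsets share at
most one element, one has `span(C₃) ⊕ span(F₃) = I₂³`, where
`I₂³ = I²·E¹ = span{e_t ∧ ∂e_S : S a dependent triple, t ∈ [n]}`,
`C₃ = {e_t ∧ ∂e_S : S a dependent triple, t ∈ S}` and
`F₃ = {e_t ∧ ∂e_S : S a dependent triple, t ∉ S}`. -/
theorem span_C3_sup_span_F3_eq_I23 (ℓ : ℕ) (α : Fin n → Module.Dual ℂ (Fin ℓ → ℂ))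
    (hne : ∀ i, α i ≠ 0)
    (hpair : ∀ i j, i ≠ j → LinearIndependent ℂ ![α i, α j])
    (Dep : Set (Finset (Fin n)))
    (hDep : Dep = {S | S.card = 3 ∧
      ¬ LinearIndependent ℂ (fun s : {x // x ∈ S} => α s.1)})
    (hshare : ∀ S ∈ Dep, ∀ S' ∈ Dep, S ≠ S' → (S ∩ S').card ≤ 1) :
    Submodule.span ℂ {x | ∃ i j k : Fin n, i < j ∧ j < k ∧
        ({i, j, k} : Finset (Fin n)) ∈ Dep ∧
        ∃ t ∈ ({i, j, k} : Finset (Fin n)), x = gen n t * bdry n i j k} ⊓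
      Submodule.span ℂ {x | ∃ i j k : Fin n, i < j ∧ j < k ∧
        ({i, j, k} : Finset (Fin n)) ∈ Dep ∧
        ∃ t ∉ ({i, j, k} : Finset (Fin n)), x = gen n t * bdry n i j k} = ⊥ ∧
    Submodule.span ℂ {x | ∃ i j k : Fin n, i < j ∧ j < k ∧
        ({i, j, k} : Finset (Fin n)) ∈ Dep ∧
        ∃ t ∈ ({i, j, k} : Finset (Fin n)), x = gen n t * bdry n i j k} ⊔
      Submodule.span ℂ {x | ∃ i j k : Fin n, i < j ∧ j < k ∧
        ({i, j, k} : Finset (Fin n)) ∈ Dep ∧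
        ∃ t ∉ ({i, j, k} : Finset (Fin n)), x = gen n t * bdry n i j k} =
      Submodule.span ℂ {x | ∃ i j k : Fin n, i < j ∧ j < k ∧
        ({i, j, k} : Finset (Fin n)) ∈ Dep ∧
        ∃ t : Fin n, x = gen n t * bdry n i j k} := by
  classical
  set Cset : Set (ExteriorAlgebra ℂ (Fin n → ℂ)) :=
    {x | ∃ i j k : Fin n, i < j ∧ j < k ∧ ({i, j, k} : Finset (Fin n)) ∈ Dep ∧
      ∃ t ∈ ({i, j, k} : Finset (Fin n)), x = gen n t * bdry n i j k} with hCset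
  set Fset : Set (ExteriorAlgebra ℂ (Fin n → ℂ)) :=
    {x | ∃ i j k : Fin n, i < j ∧ j < k ∧ ({i, j, k} : Finset (Fin n)) ∈ Dep ∧
      ∃ t ∉ ({i, j, k} : Finset (Fin n)), x = gen n t * bdry n i j k} with hFset
  set Aset : Set (ExteriorAlgebra ℂ (Fin n → ℂ)) :=
    {x | ∃ i j k : Fin n, i < j ∧ j < k ∧ ({i, j, k} : Finset (Fin n)) ∈ Dep ∧
      ∃ t : Fin n, x = gen n t * bdry n i j k} with hAset
  have hunion : Aset = Cset ∪ Fset := by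
    ext x
    simp only [hAset, hCset, hFset, Set.mem_setOf_eq, Set.mem_union]
    constructor
    · rintro ⟨i, j, k, h1, h2, h3, t, rfl⟩
      by_cases ht : t ∈ ({i, j, k} : Finset (Fin n))
      · exact Or.inl ⟨i, j, k, h1, h2, h3, t, ht, rfl⟩
      · exact Or.inr ⟨i, j, k, h1, h2, h3, t, ht, rfl⟩
    · rintro (⟨i, j, k, h1, h2, h3, t, ht, rfl⟩ | ⟨i, j, k, h1, h2, h3, t, ht, rfl⟩) <;>
        exact ⟨i, j, k, h1, h2, h3, t, rfl⟩
  refine ⟨?_, by rw [← Submodule.span_union, ← hunion]⟩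
  -- the intersection part
  set D : Finset (Fin n × Fin n × Fin n) :=
    Finset.univ.filter (fun p => p.1 < p.2.1 ∧ p.2.1 < p.2.2 ∧
      ({p.1, p.2.1, p.2.2} : Finset (Fin n)) ∈ Dep) with hD
  set Psi : ExteriorAlgebra ℂ (Fin n → ℂ) →ₗ[ℂ] ExteriorAlgebra ℂ (Fin n → ℂ) :=
    ∑ p ∈ D, (phi n p.1 p.2.1 p.2.2).smulRight
      (gen n p.1 * gen n p.2.1 * gen n p.2.2) with hPsi
  have hPsiApply : ∀ x, Psi x = ∑ p ∈ D, phi n p.1 p.2.1 p.2.2 x •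
      (gen n p.1 * gen n p.2.1 * gen n p.2.2) := by
    intro x
    rw [hPsi, LinearMap.sum_apply]
    simp only [LinearMap.smulRight_apply]
  have hC : ∀ x ∈ Submodule.span ℂ Cset, Psi x = x := by
    intro x hx
    induction hx using Submodule.span_induction with
    | mem x hxm =>
      obtain ⟨i, j, k, h1, h2, h3, t, ht, rfl⟩ := hxm
      have ht' : t = i ∨ t = j ∨ t = k := by simpa using ht
      have hx2 : gen n t * bdry n i j k = gen n i * gen n j * gen n k :=
        gen_mul_bdry n i j k t ht'
      rw [hPsiApply, hx2]
      rw [Finset.sum_eq_single ((i, j, k) : Fin n × Fin n × Fin n)]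
      · rw [phi_mono, Dm_val1 n i j k h1.ne (h1.trans h2).ne h2.ne, one_smul]
      · rintro ⟨a, b, c⟩ hq hqne
        simp only [hD, Finset.mem_filter] at hq
        obtain ⟨-, ha1, ha2, ha3⟩ := hq
        rw [phi_mono, Dm_zero_of_ne, zero_smul]
        rintro ⟨-, -, -, hset⟩
        obtain ⟨rfl, rfl, rfl⟩ := triple_eq n h1 h2 ha1 ha2 hset
        exact hqne rfl
      · intro hnot
        exfalso
        exact hnot (by simp [hD, h1, h2, h3])
    | zero => simp
    | add a b _ _ ha hb => rw [map_add, ha, hb]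
    | smul c a _ ha => rw [map_smul, ha]
  have hF : ∀ x ∈ Submodule.span ℂ Fset, Psi x = 0 := by
    intro x hx
    induction hx using Submodule.span_induction with
    | mem x hxm =>
      obtain ⟨i, j, k, h1, h2, h3, t, ht, rfl⟩ := hxm
      have hti : t ≠ i := fun h => ht (by simp [h])
      have htj : t ≠ j := fun h => ht (by simp [h])
      have htk : t ≠ k := fun h => ht (by simp [h])
      rw [hPsiApply]
      apply Finset.sum_eq_zero
      rintro ⟨a, b, c⟩ hq
      simp only [hD, Finset.mem_filter] at hq
      obtain ⟨-, ha1, ha2, ha3⟩ := hq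
      have key : ∀ u v : Fin n, u ∈ ({i, j, k} : Finset (Fin n)) →
          v ∈ ({i, j, k} : Finset (Fin n)) → u ≠ v →
          ({t, u, v} : Finset (Fin n)) ≠ {a, b, c} := by
        intro u v hu hv huv hset
        have hne' : ({a, b, c} : Finset (Fin n)) ≠ ({i, j, k} : Finset (Fin n)) := by
          intro he
          apply ht
          rw [← he, ← hset]
          simp
        have hsub : ({u, v} : Finset (Fin n)) ⊆
            ({a, b, c} : Finset (Fin n)) ∩ ({i, j, k} : Finset (Fin n)) := by
          intro x hx
          simp only [Finset.mem_insert, Finset.mem_singleton] at hx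
          rcases hx with rfl | rfl
          · exact Finset.mem_inter.2 ⟨hset ▸ (by simp), hu⟩
          · exact Finset.mem_inter.2 ⟨hset ▸ (by simp), hv⟩
        have hcard2 : (2 : ℕ) ≤ (({a, b, c} : Finset (Fin n)) ∩
            ({i, j, k} : Finset (Fin n))).card := by
          have : ({u, v} : Finset (Fin n)).card = 2 := by
            rw [Finset.card_insert_of_notMem (by simp [huv]), Finset.card_singleton]
          rw [← this]
          exact Finset.card_le_card hsub
        have := hshare _ ha3 _ h3 hne'
        omega
      rw [phi_bdry, Dm_zero_of_ne, Dm_zero_of_ne, Dm_zero_of_ne]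
      · norm_num
      · rintro ⟨h1', h2', -, hset⟩
        exact key i j (by simp) (by simp) h1.ne hset
      · rintro ⟨h1', h2', -, hset⟩
        exact key i k (by simp) (by simp) (h1.trans h2).ne hset
      · rintro ⟨h1', h2', -, hset⟩
        exact key j k (by simp) (by simp) h2.ne hset
    | zero => simp
    | add a b _ _ ha hb => rw [map_add, ha, hb, add_zero]
    | smul c a _ ha => rw [map_smul, ha, smul_zero]
  rw [eq_bot_iff]
  rintro x hx
  obtain ⟨hx1, hx2⟩ := Submodule.mem_inf.1 hx
  have : x = 0 := by rw [← hC x hx1, hF x hx2]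
  simpa using this
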